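/- Let A ∈ ℝ^{m×n}, q < m/2, let R = ⋂_{T ⊆ [m], |T| = m−2q} rowspan(A_T), and let U be the orthogonal projection onto R. Then the map x ↦ Ux is (A,q)-robust: whenever Ax₁ + e₁ = Ax₂ + e₂ with ‖e₁‖₀, ‖e₂‖₀ ≤ q, it holds that Ux₁ = Ux₂. -/

import Mathlib

open Matrix Finset

noncomputable section

/-- ℓ₀ "norm": the number of nonzero coordinates. -/
def l0 {m : ℕ} (w : Fin m → ℝ) : ℕ := (Finset.univ.filter fun i => w i ≠ 0).card

/-- The row span of the submatrix `A_T` (rows of `A` indexed by `T`), viewed inside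
Euclidean space. -/
def rowspanE {m n : ℕ} (A : Matrix (Fin m) (Fin n) ℝ) (T : Finset (Fin m)) :
    Submodule ℝ (EuclideanSpace ℝ (Fin n)) :=
  Submodule.span ℝ {w : EuclideanSpace ℝ (Fin n) | ∃ i ∈ T, w = A i}

/-- The range (column space) of a square matrix, viewed inside Euclidean space. -/
def rangeE {n : ℕ} (M : Matrix (Fin n) (Fin n) ℝ) : Submodule ℝ (EuclideanSpace ℝ (Fin n)) where
  carrier := {x | ∃ v : EuclideanSpace ℝ (Fin n), M.mulVec v = x}
  zero_mem' := ⟨0, Matrix.mulVec_zero M⟩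
  add_mem' := by
    rintro a b ⟨va, ha⟩ ⟨vb, hb⟩
    exact ⟨va + vb, by simp [Matrix.mulVec_add, ha, hb]⟩
  smul_mem' := by
    rintro c a ⟨v, hv⟩
    exact ⟨c • v, by simp [Matrix.mulVec_smul, hv]⟩

theorem stmt7 {m n : ℕ} (A : Matrix (Fin m) (Fin n) ℝ) (q : ℕ) (hq : 2 * q < m)
    (U : Matrix (Fin n) (Fin n) ℝ) (hUsymm : U.IsSymm) (hUidem : U * U = U)
    (hUrange : rangeE U = ⨅ T ∈ {T : Finset (Fin m) | T.card = m - 2 * q}, rowspanE A T)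
    (x₁ x₂ : Fin n → ℝ) (e₁ e₂ : Fin m → ℝ) (he₁ : l0 e₁ ≤ q) (he₂ : l0 e₂ ≤ q)
    (h : A.mulVec x₁ + e₁ = A.mulVec x₂ + e₂) :
    U.mulVec x₁ = U.mulVec x₂ := by
  -- difference vector
  set d : Fin n → ℝ := x₁ - x₂ with hd
  have hAd : A.mulVec d = A.mulVec x₁ - A.mulVec x₂ := Matrix.mulVec_sub A x₁ x₂
  -- the set of rows where A d ≠ 0 is small
  set S : Finset (Fin m) := Finset.univ.filter (fun i => A.mulVec d i ≠ 0) with hS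
  have hSsub : S ⊆ (Finset.univ.filter fun i => e₁ i ≠ 0) ∪
      (Finset.univ.filter fun i => e₂ i ≠ 0) := by
    intro i hi
    simp only [hS, Finset.mem_filter, Finset.mem_univ, true_and] at hi
    simp only [Finset.mem_union, Finset.mem_filter, Finset.mem_univ, true_and]
    by_contra hcon
    push_neg at hcon
    have h1 := congrFun h i
    simp only [Pi.add_apply, hcon.1, hcon.2, add_zero] at h1
    apply hi
    rw [hAd]
    simp [Pi.sub_apply, h1]
  have hScard : S.card ≤ 2 * q := by
    calc S.card ≤ _ := Finset.card_le_card hSsub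
    _ ≤ _ + _ := Finset.card_union_le _ _
    _ ≤ q + q := add_le_add he₁ he₂
    _ = 2 * q := (two_mul q).symm
  -- choose T ⊆ Sᶜ with |T| = m - 2q
  have hcompl : m - 2 * q ≤ Sᶜ.card := by
    rw [Finset.card_compl]
    simp only [Fintype.card_fin]
    exact Nat.sub_le_sub_left hScard m
  obtain ⟨T, hTsub, hTcard⟩ := Finset.exists_subset_card_eq hcompl
  -- d is orthogonal to the row span of A_T
  have key : ∀ w ∈ rowspanE A T, ∑ j, w j * d j = 0 := by
    intro w hw
    induction hw using Submodule.span_induction with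
    | mem w hw =>
        obtain ⟨i, hiT, hwi⟩ := hw
        have hiS : i ∉ S := by
          have := hTsub hiT
          simpa using this
        have : A.mulVec d i = 0 := by
          by_contra hne
          exact hiS (by simp [hS, hne])
        rw [hwi]
        simpa [Matrix.mulVec, dotProduct] using this
    | zero => simp
    | add u v hu hv ihu ihv =>
        simp only [PiLp.add_apply, add_mul, Finset.sum_add_distrib, ihu, ihv, add_zero]
    | smul c u hu ihu =>
        simp only [PiLp.smul_apply, smul_eq_mul, mul_assoc, ← Finset.mul_sum, ihu, mul_zero]
  -- U d lies in the row span of A_T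
  have hmem : (WithLp.toLp 2 (U.mulVec d) : EuclideanSpace ℝ (Fin n)) ∈ rowspanE A T := by
    have h1 : (WithLp.toLp 2 (U.mulVec d) : EuclideanSpace ℝ (Fin n)) ∈ rangeE U := ⟨WithLp.toLp 2 d, rfl⟩
    rw [hUrange] at h1
    simp only [Submodule.mem_iInf] at h1
    exact h1 T hTcard
  have hUdd : ∑ j, U.mulVec d j * d j = 0 := key _ hmem
  -- conclude U d = 0
  have hUd0 : U.mulVec d = 0 := by
    rw [← dotProduct_self_eq_zero (v := U.mulVec d)]
    have hsym : (U.mulVec d) ᵥ* U = U.mulVec (U.mulVec d) := by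
      rw [← Matrix.mulVec_transpose, hUsymm.eq]
    rw [Matrix.dotProduct_mulVec, hsym, Matrix.mulVec_mulVec, hUidem]
    simpa [dotProduct] using hUdd
  have : U.mulVec x₁ - U.mulVec x₂ = 0 := by
    rw [← Matrix.mulVec_sub]; exact hUd0
  exact sub_eq_zero.mp this
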